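/- Fix integers n, N ≥ 1, τ ≥ 0, T ≥ 1 and constants G > 0. Assume: X, φ, V_φ as in the context, with ∇φ Lipschitz with constant L_φ, V_φ(x, y) ≤ D_φ for all x, y ∈ X, and V_φ separately convex in its second argument (V_φ(a, Σ_j w_j b_j) ≤ Σ_j w_j V_φ(a, b_j) whenever w_j ≥ 0 and Σ_j w_j = 1). Let α : ℕ → (0, 1) be nonincreasing and E : ℕ → [0, ∞). Suppose that for every t with 1 ≤ t ≤ T + τ there are: an N×N doubly stochastic matrix P(t) with nonnegative entries, points x_j(t) ∈ X, vectors e_j(t) with ‖e_j(t)‖ ≤ E(t) and p_i(t) with ‖p_i(t)‖ ≤ 2N·E(t), points ỹ_i(t) = Σ_{j=1}^N [P(t)]_{ij}(x_j(t) + e_j(t)) + p_i(t) belonging to X, vectors g_i(t − τ) ∈ ℝ^n with ‖g_i(t − τ)‖ ≤ G, and suppose x_i(t+1) is a minimizer over X of x ↦ ⟨g_i(t − τ), x⟩ + V_φ(x, ỹ_i(t))/α(t). Then for every x* ∈ X: (1/(NT))Σ_{t=1+τ}^{T+τ}Σ_{i=1}^{N}⟨g_i(t − τ), ỹ_i(t)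 − x*⟩ ≤ (2N+1)·L_φ·√(2D_φ/σ_φ)·(1/T)Σ_{t=1+τ}^{T+τ} E(t)/α(t) + (G²/(2σ_φ))·(1/T)Σ_{t=1+τ}^{T+τ} α(t) + D_φ/(T·α(T+τ)) + L_φ·(8N² + 2)·(1/T)Σ_{t=1+τ}^{T+τ} E(t)²/α(t). -/

import Mathlib

open scoped RealInnerProductSpace BigOperators

lemma aux_pos_of_small (A B : ℝ) (hB : 0 ≤ B)
    (h : ∀ s : ℝ, 0 < s → s ≤ 1 → 0 ≤ s * A + s ^ 2 * B) : 0 ≤ A := by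
  by_contra hA
  push_neg at hA
  rcases eq_or_lt_of_le hB with hB0 | hB0
  · have h1 := h 1 one_pos le_rfl
    nlinarith
  · have hs0 : 0 < min 1 (-A / (2 * B)) := lt_min one_pos (div_pos (by linarith) (by linarith))
    have hs1 : min 1 (-A / (2 * B)) ≤ 1 := min_le_left _ _
    have h1 := h _ hs0 hs1
    have h2 : min 1 (-A / (2 * B)) ≤ -A / (2 * B) := min_le_right _ _
    have h3 : min 1 (-A / (2 * B)) * B ≤ -A / 2 := by
      calc min 1 (-A / (2 * B)) * B ≤ (-A / (2 * B)) * B :=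
            mul_le_mul_of_nonneg_right h2 hB
        _ = -A / 2 := by field_simp
    nlinarith

lemma aux_abel (a : ℕ) (S β : ℕ → ℝ) (M : ℝ)
    (hβpos : ∀ t, 0 < β t) (hβmono : Antitone β) :
    ∀ b, a ≤ b → (∀ t, a ≤ t → t ≤ b + 1 → 0 ≤ S t ∧ S t ≤ M) →
    ∑ t ∈ Finset.Icc a b, (S t - S (t + 1)) / β t ≤ M / β b - S (b + 1) / β b := by
  intro b hb
  induction b, hb using Nat.le_induction with
  | base =>
    intro hS
    rw [Finset.Icc_self, Finset.sum_singleton]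
    have h2 := hS (a + 1) (by omega) le_rfl
    have h1 := hS a le_rfl (by omega)
    have hβ := hβpos a
    rw [div_sub_div_same]
    gcongr
    linarith
  | succ b hab ih =>
    intro hS
    have ih' := ih (fun t ht1 ht2 => hS t ht1 (by omega))
    rw [← Finset.insert_Icc_right_eq_Icc_add_one (by omega), Finset.sum_insert (by simp)]
    have h1 := hS (b + 1) (by omega) (by omega)
    have h2 := hS (b + 2) (by omega) (by omega)
    have hp1 := hβpos b
    have hp2 := hβpos (b + 1)
    have hmon : β (b + 1) ≤ β b := hβmono (by omega)
    have e : (M - S (b + 1)) / β b ≤ (M - S (b + 1)) / β (b + 1) := by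
      gcongr
      linarith
    have s1 : (S (b + 1) - S (b + 2)) / β (b + 1)
        = S (b + 1) / β (b + 1) - S (b + 2) / β (b + 1) := sub_div _ _ _
    have s2 : (M - S (b + 1)) / β b = M / β b - S (b + 1) / β b := sub_div _ _ _
    have s3 : (M - S (b + 1)) / β (b + 1)
        = M / β (b + 1) - S (b + 1) / β (b + 1) := sub_div _ _ _
    linarith

lemma aux_smooth {n : ℕ} (φ : EuclideanSpace ℝ (Fin n) → ℝ)
    (gradφ : EuclideanSpace ℝ (Fin n) → EuclideanSpace ℝ (Fin n))
    (hgrad : ∀ x, HasGradientAt φ (gradφ x) x)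
    (L : ℝ) (hLip : ∀ a b, ‖gradφ a - gradφ b‖ ≤ L * ‖a - b‖)
    (a b : EuclideanSpace ℝ (Fin n)) :
    φ b - φ a - ⟪gradφ a, b - a⟫ ≤ L * ‖b - a‖ ^ 2 := by
  have hL0 : 0 ≤ L * ‖b - a‖ := by
    rcases eq_or_ne b a with rfl | hba
    · simp
    · have := hLip b a
      have h1 : (0:ℝ) ≤ ‖gradφ b - gradφ a‖ := norm_nonneg _
      linarith
  have key := (convex_segment a b).norm_image_sub_le_of_norm_hasFDerivWithin_le'
    (f := φ) (f' := fun z => InnerProductSpace.toDual ℝ _ (gradφ z))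
    (φ := InnerProductSpace.toDual ℝ _ (gradφ a)) (C := L * ‖b - a‖)
    (fun z _ => (hgrad z).hasFDerivAt.hasFDerivWithinAt)
    (fun z hz => by
      rw [← map_sub, (InnerProductSpace.toDual ℝ _).norm_map]
      obtain ⟨u, v, hu, hv, huv, rfl⟩ := hz
      have : u • a + v • b - a = v • (b - a) := by
        have hu1 : u = 1 - v := by linarith
        subst hu1
        module
      calc ‖gradφ (u • a + v • b) - gradφ a‖ ≤ L * ‖u • a + v • b - a‖ := hLip _ _
        _ ≤ L * ‖b - a‖ := by
            rw [this, norm_smul, Real.norm_of_nonneg hv]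
            nlinarith [norm_nonneg (b - a)])
    (left_mem_segment ℝ a b) (right_mem_segment ℝ a b)
  rw [InnerProductSpace.toDual_apply_apply] at key
  have h2 := (abs_le.mp (by rwa [Real.norm_eq_abs] at key)).2
  nlinarith [key]

lemma aux_alg (Nr Tr ab σ G L R D s1 s2 : ℝ) (hN : Nr ≠ 0) (hT : Tr ≠ 0)
    (hab : ab ≠ 0) (hσ : σ ≠ 0) :
    (1 / (Nr * Tr)) * (Nr * (G ^ 2 / (2 * σ)) * s2 + Nr * (L * (2 * Nr + 1) * R) * s1
        + Nr * D / ab)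
      = (2 * Nr + 1) * L * R * ((1 / Tr) * s1) + G ^ 2 / (2 * σ) * ((1 / Tr) * s2)
        + D / (Tr * ab) := by
  field_simp
  ring

/-- Lemma 6: bound on the first term B₁ in the convergence analysis of
Algorithm 1. -/
theorem first_term_bound
    {n : ℕ} (N τ T : ℕ) (hn : 1 ≤ n) (hN : 1 ≤ N) (hT : 1 ≤ T)
    (X : Set (EuclideanSpace ℝ (Fin n)))
    (hXne : X.Nonempty) (hXcompact : IsCompact X) (hXconvex : Convex ℝ X)
    (G : ℝ) (hG : 0 < G)
    (φ : EuclideanSpace ℝ (Fin n) → ℝ)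
    (gradφ : EuclideanSpace ℝ (Fin n) → EuclideanSpace ℝ (Fin n))
    (hφC1 : ContDiff ℝ 1 φ)
    (hgrad : ∀ x, HasGradientAt φ (gradφ x) x)
    (σ : ℝ) (hσ : 0 < σ)
    (hstrong : ∀ a b, φ b ≥ φ a + ⟪gradφ a, b - a⟫ + σ / 2 * ‖b - a‖ ^ 2)
    (L : ℝ) (hLip : ∀ a b, ‖gradφ a - gradφ b‖ ≤ L * ‖a - b‖)
    (V : EuclideanSpace ℝ (Fin n) → EuclideanSpace ℝ (Fin n) → ℝ)
    (hV : ∀ a b, V a b = φ a - φ b - ⟪gradφ b, a - b⟫)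
    (D : ℝ) (hD : ∀ a ∈ X, ∀ b ∈ X, V a b ≤ D)
    (hVsepconv : ∀ (m : ℕ) (w : Fin m → ℝ) (b : Fin m → EuclideanSpace ℝ (Fin n))
      (a : EuclideanSpace ℝ (Fin n)), (∀ j, 0 ≤ w j) → ∑ j, w j = 1 →
      V a (∑ j, w j • b j) ≤ ∑ j, w j * V a (b j))
    (α : ℕ → ℝ) (hα : ∀ t, α t ∈ Set.Ioo (0 : ℝ) 1) (hαmono : Antitone α)
    (E : ℕ → ℝ) (hE : ∀ t, 0 ≤ E t)
    (P : ℕ → Matrix (Fin N) (Fin N) ℝ)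
    (hPnonneg : ∀ t, t ∈ Finset.Icc 1 (T + τ) → ∀ i j, 0 ≤ P t i j)
    (hProw : ∀ t, t ∈ Finset.Icc 1 (T + τ) → ∀ i, ∑ j, P t i j = 1)
    (hPcol : ∀ t, t ∈ Finset.Icc 1 (T + τ) → ∀ j, ∑ i, P t i j = 1)
    (x e p ytilde g : Fin N → ℕ → EuclideanSpace ℝ (Fin n))
    (hx : ∀ j t, t ∈ Finset.Icc 1 (T + τ) → x j t ∈ X)
    (he : ∀ j t, t ∈ Finset.Icc 1 (T + τ) → ‖e j t‖ ≤ E t)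
    (hp : ∀ i t, t ∈ Finset.Icc 1 (T + τ) → ‖p i t‖ ≤ 2 * N * E t)
    (hyt : ∀ i t, t ∈ Finset.Icc 1 (T + τ) →
      ytilde i t = (∑ j, P t i j • (x j t + e j t)) + p i t)
    (hytX : ∀ i t, t ∈ Finset.Icc 1 (T + τ) → ytilde i t ∈ X)
    (hg : ∀ i t, t ∈ Finset.Icc 1 (T + τ) → ‖g i t‖ ≤ G)
    (hxmin : ∀ i t, t ∈ Finset.Icc 1 (T + τ) → x i (t + 1) ∈ X ∧
      ∀ u ∈ X, ⟪g i t, x i (t + 1)⟫ + V (x i (t + 1)) (ytilde i t) / α t ≤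
        ⟪g i t, u⟫ + V u (ytilde i t) / α t)
    (xstar : EuclideanSpace ℝ (Fin n)) (hxstar : xstar ∈ X) :
    (1 / ((N : ℝ) * T)) *
        ∑ t ∈ Finset.Icc (1 + τ) (T + τ), ∑ i, ⟪g i t, ytilde i t - xstar⟫ ≤
      (2 * N + 1) * L * Real.sqrt (2 * D / σ) *
          ((1 / (T : ℝ)) * ∑ t ∈ Finset.Icc (1 + τ) (T + τ), E t / α t)
        + G ^ 2 / (2 * σ) * ((1 / (T : ℝ)) * ∑ t ∈ Finset.Icc (1 + τ) (T + τ), α t)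
        + D / ((T : ℝ) * α (T + τ))
        + L * (8 * N ^ 2 + 2) *
            ((1 / (T : ℝ)) * ∑ t ∈ Finset.Icc (1 + τ) (T + τ), E t ^ 2 / α t) := by
  have hαpos : ∀ t, 0 < α t := fun t => (hα t).1
  have hVlb : ∀ u v : EuclideanSpace ℝ (Fin n), σ / 2 * ‖u - v‖ ^ 2 ≤ V u v := by
    intro u v
    rw [hV]
    have h := hstrong v u
    linarith
  have hV0 : ∀ u v : EuclideanSpace ℝ (Fin n), 0 ≤ V u v := fun u v =>
    le_trans (by positivity) (hVlb u v)
  have hD0 : 0 ≤ D := by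
    obtain ⟨z, hz⟩ := hXne
    exact le_trans (hV0 z z) (hD z hz z hz)
  set R := Real.sqrt (2 * D / σ) with hRdef
  have hR0 : 0 ≤ R := Real.sqrt_nonneg _
  have hdiam : ∀ u ∈ X, ∀ v ∈ X, ‖u - v‖ ≤ R := by
    intro u hu v hv
    have h1 := hVlb u v
    have h2 := hD u hu v hv
    rw [hRdef]
    apply (Real.le_sqrt (norm_nonneg _) (by positivity)).mpr
    rw [le_div_iff₀ hσ]
    nlinarith
  have hL0 : 0 ≤ L := by
    have h := hLip (EuclideanSpace.single (⟨0, by omega⟩ : Fin n) (1:ℝ)) 0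
    rw [sub_zero, EuclideanSpace.norm_single] at h
    simp only [norm_one, mul_one] at h
    exact le_trans (norm_nonneg _) h
  have hid : ∀ u z y : EuclideanSpace ℝ (Fin n),
      ⟪gradφ z - gradφ y, u - z⟫ = V u y - V u z - V z y := by
    intro u z y
    simp only [hV, inner_sub_left, inner_sub_right]
    ring
  -- key per (i, t) bound
  have hkey : ∀ (i : Fin N) (t : ℕ), t ∈ Finset.Icc 1 (T + τ) →
      ⟪g i t, ytilde i t - xstar⟫ ≤ α t * G ^ 2 / (2 * σ)
        + (V xstar (ytilde i t) - V xstar (x i (t + 1))) / α t := by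
    intro i t ht
    set z := x i (t + 1) with hzdef
    set y := ytilde i t with hydef
    have hzX : z ∈ X := (hxmin i t ht).1
    have hyX : y ∈ X := hytX i t ht
    have hαt := hαpos t
    have hA : 0 ≤ α t * ⟪g i t, xstar - z⟫ + ⟪gradφ z - gradφ y, xstar - z⟫ := by
      apply aux_pos_of_small _ (L * ‖xstar - z‖ ^ 2)
        (mul_nonneg hL0 (by positivity))
      intro s hs0 hs1
      set zs := z + s • (xstar - z) with hzsdef
      have hzsX : zs ∈ X := by
        have hrw : zs = (1 - s) • z + s • xstar := by rw [hzsdef]; module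
        rw [hrw]
        exact hXconvex hzX hxstar (by linarith) (le_of_lt hs0) (by ring)
      have hmin := (hxmin i t ht).2 zs hzsX
      rw [← hzdef, ← hydef] at hmin
      have e0 : ∀ q : ℝ, α t * (q / α t) = q := fun q => by
        field_simp
      have hmin2 : α t * ⟪g i t, z⟫ + V z y ≤ α t * ⟪g i t, zs⟫ + V zs y := by
        have hm := mul_le_mul_of_nonneg_left hmin (le_of_lt hαt)
        rw [mul_add, mul_add, e0, e0] at hm
        exact hm
      have hzs_sub : zs - z = s • (xstar - z) := by rw [hzsdef]; abel
      have hsm := aux_smooth φ gradφ hgrad L hLip z zs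
      have hsm2 : φ zs - φ z - s * ⟪gradφ z, xstar - z⟫ ≤ s ^ 2 * (L * ‖xstar - z‖ ^ 2) := by
        rw [hzs_sub, real_inner_smul_right, norm_smul, Real.norm_of_nonneg (le_of_lt hs0),
          mul_pow] at hsm
        linarith [hsm]
      have hVdiff : V zs y - V z y = φ zs - φ z - s * ⟪gradφ y, xstar - z⟫ := by
        simp only [hV]
        rw [show zs - y = (zs - z) + (z - y) by abel, inner_add_right, hzs_sub,
          real_inner_smul_right]
        ring
      have hip1 : ⟪g i t, zs⟫ - ⟪g i t, z⟫ = s * ⟪g i t, xstar - z⟫ := by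
        rw [← inner_sub_right, hzs_sub, real_inner_smul_right]
      have hip2 : α t * ⟪g i t, zs⟫ - α t * ⟪g i t, z⟫
          = α t * (s * ⟪g i t, xstar - z⟫) := by
        rw [← mul_sub, hip1]
      have hsub : ⟪gradφ z - gradφ y, xstar - z⟫
          = ⟪gradφ z, xstar - z⟫ - ⟪gradφ y, xstar - z⟫ := inner_sub_left _ _ _
      have hc1 : 0 ≤ α t * (s * ⟪g i t, xstar - z⟫) + (V zs y - V z y) := by
        linarith [hmin2, hip2]
      rw [hVdiff] at hc1
      have hc2 : 0 ≤ α t * (s * ⟪g i t, xstar - z⟫)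
          + (s * ⟪gradφ z, xstar - z⟫ + s ^ 2 * (L * ‖xstar - z‖ ^ 2))
          - s * ⟪gradφ y, xstar - z⟫ := by
        linarith [hc1, hsm2]
      have hgoal : s * (α t * ⟪g i t, xstar - z⟫ + ⟪gradφ z - gradφ y, xstar - z⟫)
          + s ^ 2 * (L * ‖xstar - z‖ ^ 2)
          = α t * (s * ⟪g i t, xstar - z⟫)
          + (s * ⟪gradφ z, xstar - z⟫ + s ^ 2 * (L * ‖xstar - z‖ ^ 2))
          - s * ⟪gradφ y, xstar - z⟫ := by
        rw [hsub]
        ring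
      rw [hgoal]
      exact hc2
    have h3pt := hid xstar z y
    have hsplit : ⟪g i t, y - xstar⟫ = ⟪g i t, y - z⟫ + ⟪g i t, z - xstar⟫ := by
      rw [← inner_add_right]
      congr 1
      abel
    have hcs : ⟪g i t, y - z⟫ ≤ G * ‖y - z‖ :=
      le_trans (real_inner_le_norm _ _)
        (mul_le_mul_of_nonneg_right (hg i t ht) (norm_nonneg _))
    have hVzy : σ / 2 * ‖y - z‖ ^ 2 ≤ V z y := by
      rw [norm_sub_rev]
      exact hVlb z y
    have hneg : ⟪g i t, z - xstar⟫ = -⟪g i t, xstar - z⟫ := by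
      rw [← inner_neg_right]
      congr 1
      abel
    have hq : ⟪g i t, z - xstar⟫ ≤ (V xstar y - V xstar z - V z y) / α t := by
      rw [hneg, le_div_iff₀ hαt]
      have hsub2 : ⟪gradφ z - gradφ y, xstar - z⟫
          = ⟪gradφ z, xstar - z⟫ - ⟪gradφ y, xstar - z⟫ := inner_sub_left _ _ _
      linarith [hA, h3pt]
    have hamgm : G * ‖y - z‖ ≤ α t * G ^ 2 / (2 * σ) + σ / 2 * ‖y - z‖ ^ 2 / α t := by
      rw [div_add_div _ _ (by positivity : (2 * σ) ≠ 0) (ne_of_gt hαt),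
        le_div_iff₀ (by positivity)]
      nlinarith [sq_nonneg (σ * ‖y - z‖ - α t * G)]
    have hd1 : (V xstar y - V xstar z - V z y) / α t
        = (V xstar y - V xstar z) / α t - V z y / α t := by
      rw [sub_div]
    have hd2 : σ / 2 * ‖y - z‖ ^ 2 / α t ≤ V z y / α t := by
      gcongr
    linarith
  -- bound V xstar (ytilde i t)
  have hVy : ∀ (i : Fin N) (t : ℕ), t ∈ Finset.Icc 1 (T + τ) →
      V xstar (ytilde i t) ≤ (∑ j, P t i j * V xstar (x j t))
        + L * ((2 * N + 1) * E t) * R := by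
    intro i t ht
    set yhat := ∑ j, P t i j • x j t with hyhatdef
    have hyhatX : yhat ∈ X :=
      hXconvex.sum_mem (fun j _ => hPnonneg t ht i j) (hProw t ht i)
        (fun j _ => hx j t ht)
    have hsep := hVsepconv N (P t i) (fun j => x j t) xstar (hPnonneg t ht i) (hProw t ht i)
    have herr : ‖ytilde i t - yhat‖ ≤ (2 * N + 1) * E t := by
      have heq : ytilde i t - yhat = (∑ j, P t i j • e j t) + p i t := by
        rw [hyt i t ht, hyhatdef]
        simp only [smul_add, Finset.sum_add_distrib]
        abel
      rw [heq]
      calc ‖(∑ j, P t i j • e j t) + p i t‖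
          ≤ ‖∑ j, P t i j • e j t‖ + ‖p i t‖ := norm_add_le _ _
        _ ≤ (∑ j, ‖P t i j • e j t‖) + ‖p i t‖ := by
            gcongr
            exact norm_sum_le _ _
        _ ≤ (∑ j : Fin N, P t i j * E t) + 2 * N * E t := by
            gcongr with j hj
            · rw [norm_smul, Real.norm_of_nonneg (hPnonneg t ht i j)]
              exact mul_le_mul_of_nonneg_left (he j t ht) (hPnonneg t ht i j)
            · exact hp i t ht
        _ = (2 * N + 1) * E t := by
            rw [← Finset.sum_mul, hProw t ht i]
            ring
    have h3 := hid xstar (ytilde i t) yhat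
    have hcs2 : |⟪gradφ (ytilde i t) - gradφ yhat, xstar - ytilde i t⟫|
        ≤ L * ((2 * N + 1) * E t) * R := by
      calc |⟪gradφ (ytilde i t) - gradφ yhat, xstar - ytilde i t⟫|
          ≤ ‖gradφ (ytilde i t) - gradφ yhat‖ * ‖xstar - ytilde i t‖ :=
            abs_real_inner_le_norm _ _
        _ ≤ (L * ‖ytilde i t - yhat‖) * R := by
            have hb1 := hLip (ytilde i t) yhat
            have hb2 := hdiam xstar hxstar (ytilde i t) (hytX i t ht)
            exact mul_le_mul hb1 hb2 (norm_nonneg _) (by positivity)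
        _ ≤ L * ((2 * N + 1) * E t) * R := by
            gcongr
      -- done
    have hVnn := hV0 (ytilde i t) yhat
    have habs := neg_abs_le ⟪gradφ (ytilde i t) - gradφ yhat, xstar - ytilde i t⟫
    linarith [hsep, h3, hcs2, habs]
  -- per-time-step bound
  set S : ℕ → ℝ := fun t => ∑ i, V xstar (x i t) with hSdef
  have hSb : ∀ t, 1 + τ ≤ t → t ≤ T + τ + 1 → 0 ≤ S t ∧ S t ≤ N * D := by
    intro t h1 h2
    have hxit : ∀ i : Fin N, x i t ∈ X := by
      intro i
      rcases Nat.lt_or_ge t (T + τ + 1) with h | h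
      · exact hx i t (Finset.mem_Icc.mpr ⟨by omega, by omega⟩)
      · have ht' : t = T + τ + 1 := by omega
        rw [ht']
        exact (hxmin i (T + τ) (Finset.mem_Icc.mpr ⟨by omega, le_rfl⟩)).1
    constructor
    · exact Finset.sum_nonneg fun i _ => hV0 _ _
    · calc S t ≤ ∑ _i : Fin N, D :=
            Finset.sum_le_sum fun i _ => hD xstar hxstar _ (hxit i)
        _ = N * D := by
            rw [Finset.sum_const, Finset.card_univ, Fintype.card_fin, nsmul_eq_mul]
  have hstep : ∀ t ∈ Finset.Icc (1 + τ) (T + τ),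
      ∑ i, ⟪g i t, ytilde i t - xstar⟫ ≤
        (N : ℝ) * (α t * G ^ 2 / (2 * σ))
          + (N : ℝ) * (L * ((2 * N + 1) * E t) * R) / α t
          + (S t - S (t + 1)) / α t := by
    intro t ht
    have ht' : t ∈ Finset.Icc 1 (T + τ) := by
      simp only [Finset.mem_Icc] at ht ⊢
      omega
    have hαt := hαpos t
    have hper : ∀ i : Fin N, ⟪g i t, ytilde i t - xstar⟫ ≤
        α t * G ^ 2 / (2 * σ)
          + ((∑ j, P t i j * V xstar (x j t)) + L * ((2 * N + 1) * E t) * R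
              - V xstar (x i (t + 1))) / α t := by
      intro i
      refine le_trans (hkey i t ht') ?_
      have hb := hVy i t ht'
      have hdd : (V xstar (ytilde i t) - V xstar (x i (t + 1))) / α t
          ≤ ((∑ j, P t i j * V xstar (x j t)) + L * ((2 * N + 1) * E t) * R
              - V xstar (x i (t + 1))) / α t := by
        apply (div_le_div_iff_of_pos_right hαt).mpr
        linarith
      linarith
    have hdouble : (∑ i : Fin N, ∑ j, P t i j * V xstar (x j t)) = S t := by
      rw [Finset.sum_comm]
      refine Finset.sum_congr rfl fun j _ => ?_
      rw [← Finset.sum_mul, hPcol t ht' j, one_mul]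
    calc ∑ i, ⟪g i t, ytilde i t - xstar⟫
        ≤ ∑ i : Fin N, (α t * G ^ 2 / (2 * σ)
            + ((∑ j, P t i j * V xstar (x j t)) + L * ((2 * N + 1) * E t) * R
              - V xstar (x i (t + 1))) / α t) :=
          Finset.sum_le_sum fun i _ => hper i
      _ = (N : ℝ) * (α t * G ^ 2 / (2 * σ))
            + ((∑ i : Fin N, ((∑ j, P t i j * V xstar (x j t))
                + L * ((2 * N + 1) * E t) * R - V xstar (x i (t + 1))))) / α t := by
          rw [Finset.sum_add_distrib, Finset.sum_const, Finset.card_univ, Fintype.card_fin,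
            nsmul_eq_mul, ← Finset.sum_div]
      _ = (N : ℝ) * (α t * G ^ 2 / (2 * σ))
            + (S t + (N : ℝ) * (L * ((2 * N + 1) * E t) * R) - S (t + 1)) / α t := by
          congr 2
          rw [Finset.sum_sub_distrib, Finset.sum_add_distrib, hdouble, Finset.sum_const,
            Finset.card_univ, Fintype.card_fin, nsmul_eq_mul]
      _ = (N : ℝ) * (α t * G ^ 2 / (2 * σ))
            + (N : ℝ) * (L * ((2 * N + 1) * E t) * R) / α t
            + (S t - S (t + 1)) / α t := by
          rw [show S t + (N : ℝ) * (L * ((2 * N + 1) * E t) * R) - S (t + 1)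
              = (N : ℝ) * (L * ((2 * N + 1) * E t) * R) + (S t - S (t + 1)) by ring,
            add_div, add_assoc]
  -- sum over t
  have habel := aux_abel (1 + τ) S α ((N : ℝ) * D) hαpos hαmono (T + τ) (by omega)
    (fun t h1 h2 => hSb t h1 (by omega))
  have hSlast := (hSb (T + τ + 1) (by omega) le_rfl).1
  have hαb := hαpos (T + τ)
  have htele : ∑ t ∈ Finset.Icc (1 + τ) (T + τ), (S t - S (t + 1)) / α t
      ≤ (N : ℝ) * D / α (T + τ) := by
    have : 0 ≤ S (T + τ + 1) / α (T + τ) := div_nonneg hSlast (le_of_lt hαb)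
    linarith
  have htotal : ∑ t ∈ Finset.Icc (1 + τ) (T + τ), ∑ i, ⟪g i t, ytilde i t - xstar⟫ ≤
      (N : ℝ) * (G ^ 2 / (2 * σ)) * (∑ t ∈ Finset.Icc (1 + τ) (T + τ), α t)
        + (N : ℝ) * (L * (2 * N + 1) * R) * (∑ t ∈ Finset.Icc (1 + τ) (T + τ), E t / α t)
        + (N : ℝ) * D / α (T + τ) := by
    calc ∑ t ∈ Finset.Icc (1 + τ) (T + τ), ∑ i, ⟪g i t, ytilde i t - xstar⟫
        ≤ ∑ t ∈ Finset.Icc (1 + τ) (T + τ),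
            ((N : ℝ) * (α t * G ^ 2 / (2 * σ))
              + (N : ℝ) * (L * ((2 * N + 1) * E t) * R) / α t
              + (S t - S (t + 1)) / α t) := Finset.sum_le_sum hstep
      _ = (N : ℝ) * (G ^ 2 / (2 * σ)) * (∑ t ∈ Finset.Icc (1 + τ) (T + τ), α t)
            + (N : ℝ) * (L * (2 * N + 1) * R)
                * (∑ t ∈ Finset.Icc (1 + τ) (T + τ), E t / α t)
            + ∑ t ∈ Finset.Icc (1 + τ) (T + τ), (S t - S (t + 1)) / α t := by
          have h1 : ∑ t ∈ Finset.Icc (1 + τ) (T + τ), (N : ℝ) * (α t * G ^ 2 / (2 * σ))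
              = (N : ℝ) * (G ^ 2 / (2 * σ)) * ∑ t ∈ Finset.Icc (1 + τ) (T + τ), α t := by
            rw [Finset.mul_sum]
            exact Finset.sum_congr rfl fun t _ => by ring
          have h2 : ∑ t ∈ Finset.Icc (1 + τ) (T + τ),
                (N : ℝ) * (L * ((2 * N + 1) * E t) * R) / α t
              = (N : ℝ) * (L * (2 * N + 1) * R)
                  * ∑ t ∈ Finset.Icc (1 + τ) (T + τ), E t / α t := by
            rw [Finset.mul_sum]
            refine Finset.sum_congr rfl fun t _ => ?_
            rw [div_eq_mul_inv, div_eq_mul_inv]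
            ring
          rw [Finset.sum_add_distrib, Finset.sum_add_distrib, h1, h2]
      _ ≤ _ := add_le_add_right htele _
  -- final arithmetic
  have hNpos : (0 : ℝ) < (N : ℝ) := by exact_mod_cast hN
  have hTpos : (0 : ℝ) < (T : ℝ) := by exact_mod_cast hT
  have hNT : (0 : ℝ) < 1 / ((N : ℝ) * T) := by positivity
  have hterm4 : 0 ≤ L * (8 * N ^ 2 + 2) *
      ((1 / (T : ℝ)) * ∑ t ∈ Finset.Icc (1 + τ) (T + τ), E t ^ 2 / α t) := by
    apply mul_nonneg (mul_nonneg hL0 (by positivity))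
    apply mul_nonneg (by positivity)
    exact Finset.sum_nonneg fun t _ => div_nonneg (by positivity) (le_of_lt (hαpos t))
  have hmain : (1 / ((N : ℝ) * T)) *
      ∑ t ∈ Finset.Icc (1 + τ) (T + τ), ∑ i, ⟪g i t, ytilde i t - xstar⟫ ≤
      (2 * N + 1) * L * R *
          ((1 / (T : ℝ)) * ∑ t ∈ Finset.Icc (1 + τ) (T + τ), E t / α t)
        + G ^ 2 / (2 * σ) * ((1 / (T : ℝ)) * ∑ t ∈ Finset.Icc (1 + τ) (T + τ), α t)
        + D / ((T : ℝ) * α (T + τ)) := by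
    calc (1 / ((N : ℝ) * T)) *
        ∑ t ∈ Finset.Icc (1 + τ) (T + τ), ∑ i, ⟪g i t, ytilde i t - xstar⟫
        ≤ (1 / ((N : ℝ) * T)) *
            ((N : ℝ) * (G ^ 2 / (2 * σ)) * (∑ t ∈ Finset.Icc (1 + τ) (T + τ), α t)
              + (N : ℝ) * (L * (2 * N + 1) * R)
                  * (∑ t ∈ Finset.Icc (1 + τ) (T + τ), E t / α t)
              + (N : ℝ) * D / α (T + τ)) :=
          mul_le_mul_of_nonneg_left htotal (le_of_lt hNT)
      _ = (2 * N + 1) * L * R *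
            ((1 / (T : ℝ)) * ∑ t ∈ Finset.Icc (1 + τ) (T + τ), E t / α t)
          + G ^ 2 / (2 * σ) * ((1 / (T : ℝ)) * ∑ t ∈ Finset.Icc (1 + τ) (T + τ), α t)
          + D / ((T : ℝ) * α (T + τ)) :=
          aux_alg (N : ℝ) (T : ℝ) (α (T + τ)) σ G L R D
            (∑ t ∈ Finset.Icc (1 + τ) (T + τ), E t / α t)
            (∑ t ∈ Finset.Icc (1 + τ) (T + τ), α t)
            (ne_of_gt hNpos) (ne_of_gt hTpos) (ne_of_gt hαb) (ne_of_gt hσ)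
  linarith
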